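/- Let f : ℝ^d → ℝ be three times continuously differentiable and suppose there are constants G_min, L, ρ > 0 such that for all θ, x, y ∈ ℝ^d: ‖∇f(θ)‖₂ ≥ G_min, ‖∇²f(θ)‖ ≤ L (operator norm), and ‖∇²f(x) − ∇²f(y)‖ ≤ ρ‖x − y‖₂. Let J(θ) denote the derivative of the normalized gradient map θ ↦ ∇f(θ)/‖∇f(θ)‖₂. Then J is Lipschitz continuous in operator norm with Lipschitz constant (3L² + ρ·G_min)/G_min², i.e., ‖J(x) − J(y)‖ ≤ ((3L² + ρ·G_min)/G_min²)·‖x − y‖₂ for all x, y. -/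

import Mathlib

open scoped RealInnerProductSpace

lemma ngjl_unit_sub_le {F : Type*} [NormedAddCommGroup F] [InnerProductSpace ℝ F]
    {u v : F} {G : ℝ} (hG : 0 < G) (hu : G ≤ ‖u‖) (hv : G ≤ ‖v‖) :
    ‖‖u‖⁻¹ • u - ‖v‖⁻¹ • v‖ ≤ ‖u - v‖ / G := by
  have ha : 0 < ‖u‖ := lt_of_lt_of_le hG hu
  have hb : 0 < ‖v‖ := lt_of_lt_of_le hG hv
  have key : ‖‖u‖⁻¹ • u - ‖v‖⁻¹ • v‖ ^ 2 ≤ (‖u - v‖ / G) ^ 2 := by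
    have e1 : ‖‖u‖⁻¹ • u - ‖v‖⁻¹ • v‖ ^ 2
        = 2 - 2 * (‖u‖⁻¹ * (‖v‖⁻¹ * ⟪u, v⟫)) := by
      rw [@norm_sub_sq_real, real_inner_smul_left, real_inner_smul_right,
        norm_smul, norm_smul]
      simp [abs_of_pos, ha, hb, inv_mul_cancel₀ ha.ne', inv_mul_cancel₀ hb.ne']
      ring
    have e2 : ‖u - v‖ ^ 2 = ‖u‖ ^ 2 - 2 * ⟪u, v⟫ + ‖v‖ ^ 2 := by
      rw [@norm_sub_sq_real]
    rw [e1, div_pow, e2]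
    have ht : ⟪u, v⟫ ≤ ‖u‖ * ‖v‖ := real_inner_le_norm u v
    have hab : G ^ 2 ≤ ‖u‖ * ‖v‖ := by nlinarith
    have e3 : 2 - 2 * (‖u‖⁻¹ * (‖v‖⁻¹ * ⟪u, v⟫))
        = (2 * (‖u‖ * ‖v‖) - 2 * ⟪u, v⟫) / (‖u‖ * ‖v‖) := by
      field_simp
    rw [e3, div_le_div_iff₀ (by positivity) (by positivity)]
    have h1 : 0 ≤ ‖u‖ * ‖v‖ * (‖u‖ - ‖v‖) ^ 2 := by positivity
    have h2 : 0 ≤ (‖u‖ * ‖v‖ - G ^ 2) * (‖u‖ * ‖v‖ - ⟪u, v⟫) := by nlinarith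
    nlinarith [h1, h2]
  have h0 : (0:ℝ) ≤ ‖u - v‖ / G := by positivity
  nlinarith [norm_nonneg (‖u‖⁻¹ • u - ‖v‖⁻¹ • v)]

lemma ngjl_proj_le {F : Type*} [NormedAddCommGroup F] [InnerProductSpace ℝ F]
    {h : F} (hh : ‖h‖ = 1) (z : F) : ‖z - ⟪h, z⟫ • h‖ ≤ ‖z‖ := by
  have key : ‖z - ⟪h, z⟫ • h‖ ^ 2 ≤ ‖z‖ ^ 2 := by
    rw [@norm_sub_sq_real, real_inner_smul_right, norm_smul, hh, real_inner_comm]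
    simp [sq_abs]
    nlinarith [sq_nonneg ⟪h, z⟫]
  nlinarith [norm_nonneg (z - ⟪h, z⟫ • h), norm_nonneg z]

set_option maxHeartbeats 1000000 in
/-- **Lipschitz constant of the Jacobian of the normalized gradient.** If `f` is C³ with
`‖∇f‖ ≥ G_min > 0`, `‖∇²f‖ ≤ L`, and `ρ`-Lipschitz Hessian, then the derivative `J` of
the normalized gradient map `θ ↦ ∇f(θ)/‖∇f(θ)‖` is Lipschitz in operator norm with
constant `(3L² + ρ G_min)/G_min²`. -/
theorem normalized_gradient_jacobian_lipschitz {d : ℕ}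
    (f : EuclideanSpace ℝ (Fin d) → ℝ) (hf : ContDiff ℝ 3 f)
    (Gmin L ρ : ℝ) (hGmin : 0 < Gmin) (hL : 0 < L) (hρ : 0 < ρ)
    (hgrad : ∀ θ : EuclideanSpace ℝ (Fin d), Gmin ≤ ‖gradient f θ‖)
    (hHess : ∀ θ : EuclideanSpace ℝ (Fin d), ‖fderiv ℝ (gradient f) θ‖ ≤ L)
    (hHessLip : ∀ x y : EuclideanSpace ℝ (Fin d),
      ‖fderiv ℝ (gradient f) x - fderiv ℝ (gradient f) y‖ ≤ ρ * ‖x - y‖) :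
    ∀ x y : EuclideanSpace ℝ (Fin d),
      ‖fderiv ℝ (fun θ => ‖gradient f θ‖⁻¹ • gradient f θ) x
          - fderiv ℝ (fun θ => ‖gradient f θ‖⁻¹ • gradient f θ) y‖
        ≤ ((3 * L ^ 2 + ρ * Gmin) / Gmin ^ 2) * ‖x - y‖ := by
  set g := gradient f with hgdef
  have hgC : ContDiff ℝ 2 g := by
    have h1 : ContDiff ℝ 2 (fderiv ℝ f) := hf.fderiv_right (by norm_num)
    exact ((InnerProductSpace.toDual ℝ (EuclideanSpace ℝ (Fin d))).symm.contDiff.comp h1)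
  have hgd : Differentiable ℝ g := hgC.differentiable (by norm_num)
  have hne : ∀ θ, (0:ℝ) < ‖g θ‖ := fun θ => lt_of_lt_of_le hGmin (hgrad θ)
  -- the derivative of the normalized gradient map
  have key : ∀ θ, HasFDerivAt (fun θ => ‖g θ‖⁻¹ • g θ)
      ((‖g θ‖⁻¹ • fderiv ℝ g θ) +
        ((-(‖g θ‖ ^ 2)⁻¹ * ‖g θ‖⁻¹) • ((innerSL ℝ (g θ)).comp (fderiv ℝ g θ))).smulRight (g θ)) θ := by
    intro θ
    have h1 : HasFDerivAt g (fderiv ℝ g θ) θ := (hgd θ).hasFDerivAt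
    have h2 : HasFDerivAt (fun t => ‖g t‖ ^ 2)
        (2 • ((innerSL ℝ (g θ)).comp (fderiv ℝ g θ))) θ := h1.norm_sq
    have h3 : HasFDerivAt (fun t => Real.sqrt (‖g t‖ ^ 2))
        ((1 / (2 * Real.sqrt (‖g θ‖ ^ 2))) • (2 • ((innerSL ℝ (g θ)).comp (fderiv ℝ g θ)))) θ :=
      h2.sqrt (pow_pos (hne θ) 2).ne'
    have h3' : HasFDerivAt (fun t => ‖g t‖)
        (‖g θ‖⁻¹ • ((innerSL ℝ (g θ)).comp (fderiv ℝ g θ))) θ := by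
      have e : (fun t => Real.sqrt (‖g t‖ ^ 2)) = fun t => ‖g t‖ := by
        funext t; exact Real.sqrt_sq (norm_nonneg _)
      rw [e] at h3
      convert h3 using 1
      ext w
      simp only [ContinuousLinearMap.coe_smul', Pi.smul_apply, smul_eq_mul,
        Real.sqrt_sq (norm_nonneg _)]
      rw [← Nat.cast_smul_eq_nsmul ℝ]
      simp only [ContinuousLinearMap.coe_smul', Pi.smul_apply, smul_eq_mul, Nat.cast_ofNat]
      have := (hne θ).ne'
      field_simp
    have h4 : HasFDerivAt (fun t => ‖g t‖⁻¹)
        ((-(‖g θ‖ ^ 2)⁻¹ * ‖g θ‖⁻¹) • ((innerSL ℝ (g θ)).comp (fderiv ℝ g θ))) θ := by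
      have := (hasDerivAt_inv (hne θ).ne').comp_hasFDerivAt θ h3'
      rw [← smul_smul]
      exact this
    exact h4.smul h1
  -- pointwise formula for the Jacobian
  have hJ : ∀ θ w, (fderiv ℝ (fun θ => ‖g θ‖⁻¹ • g θ) θ) w
      = ‖g θ‖⁻¹ • ((fderiv ℝ g θ) w
          - ⟪‖g θ‖⁻¹ • g θ, (fderiv ℝ g θ) w⟫ • (‖g θ‖⁻¹ • g θ)) := by
    intro θ w
    rw [(key θ).fderiv]
    have hθ := (hne θ).ne'
    simp only [ContinuousLinearMap.add_apply, ContinuousLinearMap.coe_smul', Pi.smul_apply,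
      ContinuousLinearMap.smulRight_apply, ContinuousLinearMap.comp_apply, innerSL_apply_apply,
      real_inner_smul_left, smul_smul, smul_sub]
    match_scalars <;> field_simp <;> ring_nf <;> field_simp
  -- g is L-Lipschitz
  have hglip : ∀ x y : EuclideanSpace ℝ (Fin d), ‖g x - g y‖ ≤ L * ‖x - y‖ := by
    intro x y
    have := convex_univ.norm_image_sub_le_of_norm_fderiv_le
      (f := g) (fun θ _ => (hgd θ)) (fun θ _ => hHess θ) (Set.mem_univ y) (Set.mem_univ x)
    simpa using this
  intro x y
  have hx1 : ‖‖g x‖⁻¹ • g x‖ = 1 := by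
    rw [norm_smul, norm_inv, norm_norm, inv_mul_cancel₀ (hne x).ne']
  have hy1 : ‖‖g y‖⁻¹ • g y‖ = 1 := by
    rw [norm_smul, norm_inv, norm_norm, inv_mul_cancel₀ (hne y).ne']
  have hhdiff : ‖‖g x‖⁻¹ • g x - ‖g y‖⁻¹ • g y‖ ≤ L * ‖x - y‖ / Gmin := by
    refine le_trans (ngjl_unit_sub_le hGmin (hgrad x) (hgrad y)) ?_
    gcongr
    exact hglip x y
  apply ContinuousLinearMap.opNorm_le_bound _ (by positivity)
  intro w
  rw [ContinuousLinearMap.sub_apply]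
  set u := g x
  set v := g y
  set Hx := fderiv ℝ g x
  set Hy := fderiv ℝ g y
  set hx := ‖u‖⁻¹ • u with hhx
  set hy := ‖v‖⁻¹ • v with hhy
  set Pxw := Hx w - ⟪hx, Hx w⟫ • hx with hPxw
  set Pyw := Hy w - ⟪hy, Hy w⟫ • hy with hPyw
  have hHxw : ‖Hx w‖ ≤ L * ‖w‖ :=
    le_trans (Hx.le_opNorm w) (mul_le_mul_of_nonneg_right (hHess x) (norm_nonneg w))
  have hHyw : ‖Hy w‖ ≤ L * ‖w‖ :=
    le_trans (Hy.le_opNorm w) (mul_le_mul_of_nonneg_right (hHess y) (norm_nonneg w))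
  have hPx : ‖Pxw‖ ≤ L * ‖w‖ := le_trans (ngjl_proj_le hx1 (Hx w)) hHxw
  have hT1 : |‖u‖⁻¹ - ‖v‖⁻¹| ≤ L * ‖x - y‖ / Gmin ^ 2 := by
    rw [inv_sub_inv (hne x).ne' (hne y).ne', abs_div]
    rw [abs_of_pos (mul_pos (hne x) (hne y)), abs_sub_comm]
    refine div_le_div₀ (by positivity) ?_ (by positivity) ?_
    · exact le_trans (abs_norm_sub_norm_le u v) (hglip x y)
    · nlinarith [hgrad x, hgrad y]
  have hz : ‖Hx w - Hy w‖ ≤ ρ * ‖x - y‖ * ‖w‖ := by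
    have h1 : Hx w - Hy w = (Hx - Hy) w := by simp
    rw [h1]
    exact le_trans ((Hx - Hy).le_opNorm w)
      (mul_le_mul_of_nonneg_right (hHessLip x y) (norm_nonneg w))
  have hT2 : ‖Pxw - Pyw‖ ≤ ρ * ‖x - y‖ * ‖w‖ + 2 * (L * (L * ‖x - y‖ / Gmin)) * ‖w‖ := by
    have hid : Pxw - Pyw = ((Hx w - Hy w) - ⟪hx, Hx w - Hy w⟫ • hx)
        - (⟪hx - hy, Hy w⟫ • hx + ⟪hy, Hy w⟫ • (hx - hy)) := by
      rw [hPxw, hPyw]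
      simp only [inner_sub_left, inner_sub_right, sub_smul, smul_sub]
      module
    rw [hid]
    refine le_trans (norm_sub_le _ _) ?_
    have b1 : ‖(Hx w - Hy w) - ⟪hx, Hx w - Hy w⟫ • hx‖ ≤ ρ * ‖x - y‖ * ‖w‖ :=
      le_trans (ngjl_proj_le hx1 _) hz
    have b2 : ‖⟪hx - hy, Hy w⟫ • hx + ⟪hy, Hy w⟫ • (hx - hy)‖
        ≤ 2 * (L * (L * ‖x - y‖ / Gmin)) * ‖w‖ := by
      refine le_trans (norm_add_le _ _) ?_
      have c1 : ‖⟪hx - hy, Hy w⟫ • hx‖ ≤ (L * ‖x - y‖ / Gmin) * (L * ‖w‖) := by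
        rw [norm_smul, hx1, mul_one, Real.norm_eq_abs]
        refine le_trans (abs_real_inner_le_norm _ _) ?_
        exact mul_le_mul hhdiff hHyw (norm_nonneg _) (by positivity)
      have c2 : ‖⟪hy, Hy w⟫ • (hx - hy)‖ ≤ (L * ‖w‖) * (L * ‖x - y‖ / Gmin) := by
        rw [norm_smul, Real.norm_eq_abs]
        refine mul_le_mul ?_ hhdiff (norm_nonneg _) (by positivity)
        refine le_trans (abs_real_inner_le_norm _ _) ?_
        rw [hy1, one_mul]
        exact hHyw
      calc ‖⟪hx - hy, Hy w⟫ • hx‖ + ‖⟪hy, Hy w⟫ • (hx - hy)‖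
          ≤ (L * ‖x - y‖ / Gmin) * (L * ‖w‖) + (L * ‖w‖) * (L * ‖x - y‖ / Gmin) :=
            add_le_add c1 c2
        _ = 2 * (L * (L * ‖x - y‖ / Gmin)) * ‖w‖ := by ring
    linarith
  have hbinv : ‖v‖⁻¹ ≤ Gmin⁻¹ := by
    exact inv_anti₀ hGmin (hgrad y)
  calc ‖(fderiv ℝ (fun θ => ‖g θ‖⁻¹ • g θ) x) w - (fderiv ℝ (fun θ => ‖g θ‖⁻¹ • g θ) y) w‖
      = ‖(‖u‖⁻¹ - ‖v‖⁻¹) • Pxw + ‖v‖⁻¹ • (Pxw - Pyw)‖ := by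
        rw [hJ x w, hJ y w, ← hhx, ← hhy, ← hPxw, ← hPyw]
        congr 1
        module
    _ ≤ |‖u‖⁻¹ - ‖v‖⁻¹| * ‖Pxw‖ + ‖v‖⁻¹ * ‖Pxw - Pyw‖ := by
        refine le_trans (norm_add_le _ _) ?_
        rw [norm_smul, norm_smul, Real.norm_eq_abs, Real.norm_eq_abs,
          abs_of_pos (inv_pos.mpr (hne y))]
    _ ≤ (L * ‖x - y‖ / Gmin ^ 2) * (L * ‖w‖)
        + Gmin⁻¹ * (ρ * ‖x - y‖ * ‖w‖ + 2 * (L * (L * ‖x - y‖ / Gmin)) * ‖w‖) := by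
        refine add_le_add (mul_le_mul hT1 hPx (norm_nonneg _) (by positivity))
          (mul_le_mul hbinv hT2 (norm_nonneg _) (by positivity))
    _ = ((3 * L ^ 2 + ρ * Gmin) / Gmin ^ 2) * ‖x - y‖ * ‖w‖ := by
        field_simp
        ring
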